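/- arXiv:1504.06316 — 2 statements merged into one kernel-verified Lean document; each statement's English description precedes it below -/
import Mathlib

section
/- Let F ≥ 1 and j ≥ 1 with j ≤ log₂ F, and suppose F_j ≤ 2F and ρ_j = 2^{j−1}·⌈F_j/F⌉. Then F_j ≤ F·√(2^{2−j}·ρ_j). -/
theorem fingerprint_size_bound (F Fj ρj : ℝ) (j : ℕ)
    (hF : 1 ≤ F) (hj : 1 ≤ j) (hjF : (j : ℝ) ≤ Real.logb 2 F)
    (hFjpos : 0 < Fj) (hFj : Fj ≤ 2 * F)
    (hρj : ρj = 2 ^ (j - 1) * (⌈Fj / F⌉ : ℝ)) :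
    Fj ≤ F * Real.sqrt ((2:ℝ) ^ ((2:ℤ) - j) * ρj) := by
  have hFpos : (0:ℝ) < F := lt_of_lt_of_le one_pos hF
  set x : ℝ := Fj / F with hx
  have hxpos : 0 < x := div_pos hFjpos hFpos
  have hx2 : x ≤ 2 := by
    rw [hx, div_le_iff₀ hFpos]; linarith
  have hceil : x ≤ (⌈x⌉ : ℝ) := Int.le_ceil x
  have hkey : (2:ℝ) ^ ((2:ℤ) - j) * ρj = 2 * (⌈x⌉ : ℝ) := by
    rw [hρj]
    have h1 : ((2:ℝ) ^ (j - 1) : ℝ) = (2:ℝ) ^ ((j:ℤ) - 1) := by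
      rw [← zpow_natCast]
      congr 1
      omega
    rw [h1, ← mul_assoc, ← zpow_add₀ (by norm_num : (2:ℝ) ≠ 0)]
    norm_num
  rw [hkey]
  have hsq : x ≤ Real.sqrt (2 * (⌈x⌉ : ℝ)) := by
    rw [Real.le_sqrt hxpos.le]
    · nlinarith
    · nlinarith
  calc Fj = F * x := by rw [hx]; field_simp [hFpos.ne']
    _ ≤ F * Real.sqrt (2 * (⌈x⌉ : ℝ)) := by
        exact mul_le_mul_of_nonneg_left hsq hFpos.le
end

section
/- Let L, F, T_j, N₁, ρ_j, k be positive reals with k ≤ N_j = 2^{j}·N₁/2, N₁ = 8L/F (up to ceiling), ρ_j ≥ 1, and k·ρ_j/2 ≤ T_j. If F_j ≤ F·√(2^{2−j}ρ_j) and N_j·F_j ≤ 2^j·N₁·F terms hold, then k·F_j ≤ 2·√(8·L·T_j·F). -/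
theorem corrupted_rounds_cost (L F Tj N₁ ρj k Fj : ℝ) (j : ℕ)
    (hL : 0 < L) (hF : 0 < F) (hTj : 0 < Tj) (hN₁pos : 0 < N₁)
    (hρpos : 0 < ρj) (hk : 0 < k)
    (hkN : k ≤ 2 ^ j * N₁ / 2) (hN₁ : N₁ = 8 * L / F) (hρ : 1 ≤ ρj)
    (hT : k * ρj / 2 ≤ Tj)
    (hFj : Fj ≤ F * Real.sqrt ((2:ℝ) ^ ((2:ℤ) - j) * ρj))
    (hNF : (2 ^ j * N₁ / 2) * Fj ≤ 2 ^ j * N₁ * F) :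
    k * Fj ≤ 2 * Real.sqrt (8 * L * Tj * F) := by
  have hRHS : 0 ≤ 2 * Real.sqrt (8 * L * Tj * F) := by positivity
  rcases le_or_gt Fj 0 with hFj0 | hFj0
  · nlinarith [mul_nonpos_of_nonneg_of_nonpos hk.le hFj0]
  · have h2j : (0:ℝ) < 2 ^ j := by positivity
    have hpow : (2:ℝ) ^ ((2:ℤ) - j) = 4 / 2 ^ j := by
      rw [zpow_sub₀ (by norm_num : (2:ℝ) ≠ 0)]
      norm_num [zpow_natCast]
    have harg : (0:ℝ) ≤ (2:ℝ) ^ ((2:ℤ) - j) * ρj := by positivity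
    have hsq : Fj ^ 2 ≤ F ^ 2 * ((2:ℝ) ^ ((2:ℤ) - j) * ρj) := by
      have h := mul_le_mul hFj hFj hFj0.le (by positivity)
      calc Fj ^ 2 = Fj * Fj := sq Fj
        _ ≤ (F * Real.sqrt ((2:ℝ) ^ ((2:ℤ) - j) * ρj)) *
            (F * Real.sqrt ((2:ℝ) ^ ((2:ℤ) - j) * ρj)) := h
        _ = F ^ 2 * ((2:ℝ) ^ ((2:ℤ) - j) * ρj) := by
            rw [mul_mul_mul_comm, Real.mul_self_sqrt harg]; ring
    -- key: (k*Fj)^2 ≤ 32 L Tj F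
    have hk2j : k / 2 ^ j ≤ 4 * L / F := by
      rw [div_le_div_iff₀ h2j hF]
      rw [hN₁] at hkN
      have h := mul_le_mul_of_nonneg_right hkN hF.le
      have h8 : 2 ^ j * (8 * L / F) / 2 * F = 4 * L * 2 ^ j := by field_simp; ring
      linarith [h.trans_eq h8]
    have hkρ : k * ρj ≤ 2 * Tj := by linarith
    have hkey : (k * Fj) ^ 2 ≤ 4 * (8 * L * Tj * F) := by
      have h1 : (k * Fj) ^ 2 ≤ k ^ 2 * (F ^ 2 * ((2:ℝ) ^ ((2:ℤ) - j) * ρj)) := by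
        have := mul_le_mul_of_nonneg_left hsq (by positivity : (0:ℝ) ≤ k ^ 2)
        nlinarith
      have h2 : k ^ 2 * (F ^ 2 * ((2:ℝ) ^ ((2:ℤ) - j) * ρj))
          = 4 * F ^ 2 * (k / 2 ^ j) * (k * ρj) := by
        rw [hpow]; field_simp
      have h3 : 4 * F ^ 2 * (k / 2 ^ j) * (k * ρj) ≤ 4 * F ^ 2 * (4 * L / F) * (2 * Tj) := by
        have hkd : 0 ≤ k / 2 ^ j := by positivity
        have hkρ0 : 0 ≤ k * ρj := by positivity
        have hLF : 0 ≤ 4 * L / F := by positivity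
        have := mul_le_mul (mul_le_mul_of_nonneg_left hk2j (by positivity : (0:ℝ) ≤ 4 * F ^ 2)) hkρ hkρ0 (by positivity)
        linarith
      have h4 : 4 * F ^ 2 * (4 * L / F) * (2 * Tj) = 4 * (8 * L * Tj * F) := by
        field_simp; ring
      linarith
    have : k * Fj ≤ Real.sqrt ((k * Fj) ^ 2) := by
      rw [Real.sqrt_sq (by positivity)]
    calc k * Fj ≤ Real.sqrt ((k * Fj) ^ 2) := this
      _ ≤ Real.sqrt (4 * (8 * L * Tj * F)) := Real.sqrt_le_sqrt hkey
      _ = 2 * Real.sqrt (8 * L * Tj * F) := by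
          rw [show (4:ℝ) * (8 * L * Tj * F) = 2 ^ 2 * (8 * L * Tj * F) by ring,
            Real.sqrt_mul (by norm_num), Real.sqrt_sq (by norm_num : (0:ℝ) ≤ 2)]
end
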